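/- (From Example 2.2 of the paper.) Let M = ℝ² ∖ {(1, t) : 1 ≤ t ≤ 2} and V = {(1 + s, t + s) : t ∈ (1,2), s ∈ (0,∞)}. Then for every v ∈ V one has d_M((0,0), v) = 0, while inf_{δ > 0} d_M((0,−δ), v) > 0; in particular, the Lorentzian distance d_M : M × M → [0,∞] is discontinuous at ((0,0), v) for every v ∈ V. -/

import Mathlib

open Set
open scoped ENNReal

/-- A vector of the Minkowski plane (first coordinate space, second coordinate time)
is future-directed timelike. -/
def FDTimelike (v : ℝ × ℝ) : Prop := |v.1| < v.2

/-- A future-directed timelike curve in `M ⊆ ℝ²` from `p` to `q`: a piecewise `C¹`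
map `γ : [0,1] → M` all of whose one-sided derivatives are future-directed timelike. -/
def IsTimelikeCurveIn (M : Set (ℝ × ℝ)) (γ : ℝ → ℝ × ℝ) (p q : ℝ × ℝ) : Prop :=
  γ 0 = p ∧ γ 1 = q ∧ (∀ s ∈ Set.Icc (0 : ℝ) 1, γ s ∈ M) ∧
  ∃ (m : ℕ) (t : ℕ → ℝ), 0 < m ∧ t 0 = 0 ∧ t m = 1 ∧ (∀ j < m, t j < t (j + 1)) ∧
    ∀ j < m,
      ContDiffOn ℝ 1 γ (Set.Icc (t j) (t (j + 1))) ∧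
      ∀ s ∈ Set.Icc (t j) (t (j + 1)),
        FDTimelike (derivWithin γ (Set.Icc (t j) (t (j + 1))) s)

/-- The Lorentzian length of a curve in the Minkowski plane. -/
noncomputable def Llen (γ : ℝ → ℝ × ℝ) : ℝ :=
  ∫ s in (0 : ℝ)..1, Real.sqrt ((deriv γ s).2 ^ 2 - (deriv γ s).1 ^ 2)

/-- The Lorentzian distance of `M ⊆ ℝ²`. -/
noncomputable def LorDist (M : Set (ℝ × ℝ)) (p q : ℝ × ℝ) : ℝ≥0∞ :=
  ⨆ (γ : ℝ → ℝ × ℝ) (_ : IsTimelikeCurveIn M γ p q), ENNReal.ofReal (Llen γ)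


/-- The Minkowski plane with the closed segment `{1} × [1,2]` removed. -/
def Mslit : Set (ℝ × ℝ) := {p : ℝ × ℝ | ¬ (p.1 = 1 ∧ 1 ≤ p.2 ∧ p.2 ≤ 2)}

/-- The set `V = {(1+s, t+s) : t ∈ (1,2), s ∈ (0,∞)}`. -/
def Vshadow : Set (ℝ × ℝ) :=
  {v : ℝ × ℝ | ∃ t : ℝ, 1 < t ∧ t < 2 ∧ ∃ s : ℝ, 0 < s ∧ v = (1 + s, t + s)}

/-- one-piece cone inequality -/
lemma piece_cone {γ : ℝ → ℝ × ℝ} {a b : ℝ}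
    (hcd : ContDiffOn ℝ 1 γ (Icc a b))
    (hT : ∀ x ∈ Icc a b, FDTimelike (derivWithin γ (Icc a b) x))
    {u w : ℝ} (hu : a ≤ u) (huw : u < w) (hw : w ≤ b) :
    |(γ w).1 - (γ u).1| < (γ w).2 - (γ u).2 := by
  have hab : a < b := lt_of_le_of_lt hu (lt_of_lt_of_le huw hw)
  have hdiff : DifferentiableOn ℝ γ (Icc a b) := hcd.differentiableOn one_ne_zero
  have hder : ∀ x ∈ Icc a b, HasDerivWithinAt γ (derivWithin γ (Icc a b) x) (Icc a b) x :=
    fun x hx => (hdiff x hx).hasDerivWithinAt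
  have hcont : ContinuousOn γ (Icc a b) := hcd.continuousOn
  -- component derivatives
  have hder1 : ∀ x ∈ Icc a b,
      HasDerivWithinAt (fun y => (γ y).1) (derivWithin γ (Icc a b) x).1 (Icc a b) x := by
    intro x hx
    exact ((ContinuousLinearMap.fst ℝ ℝ ℝ).hasFDerivAt).comp_hasDerivWithinAt x (hder x hx)
  have hder2 : ∀ x ∈ Icc a b,
      HasDerivWithinAt (fun y => (γ y).2) (derivWithin γ (Icc a b) x).2 (Icc a b) x := by
    intro x hx
    exact ((ContinuousLinearMap.snd ℝ ℝ ℝ).hasFDerivAt).comp_hasDerivWithinAt x (hder x hx)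
  have hint : interior (Icc a b) ⊆ Icc a b := interior_subset
  have key : ∀ (c : ℝ), (c = 1 ∨ c = -1) → StrictMonoOn (fun y => (γ y).2 + c * (γ y).1) (Icc a b) := by
    intro c hc
    apply strictMonoOn_of_hasDerivWithinAt_pos (convex_Icc a b)
      (f' := fun x => (derivWithin γ (Icc a b) x).2 + c * (derivWithin γ (Icc a b) x).1)
    · exact (hcont.snd).add (continuousOn_const.mul hcont.fst)
    · intro x hx
      exact (((hder2 x (hint hx)).add ((hder1 x (hint hx)).const_mul c)).mono hint)
    · intro x hx
      have := hT x (hint hx)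
      rw [FDTimelike, abs_lt] at this
      rcases hc with rfl | rfl <;> nlinarith [this.1, this.2]
  have hu' : u ∈ Icc a b := ⟨hu, le_trans huw.le hw⟩
  have hw' : w ∈ Icc a b := ⟨le_trans hu huw.le, hw⟩
  have h1 := key 1 (Or.inl rfl) hu' hw' huw
  have h2 := key (-1) (Or.inr rfl) hu' hw' huw
  simp only [one_mul, neg_one_mul] at h1 h2
  rw [abs_lt]
  constructor <;> linarith

/-- chained cone inequality for a timelike curve -/
lemma curve_cone {M : Set (ℝ × ℝ)} {γ : ℝ → ℝ × ℝ} {p q : ℝ × ℝ}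
    (h : IsTimelikeCurveIn M γ p q) {u w : ℝ} (hu : 0 ≤ u) (huw : u < w) (hw : w ≤ 1) :
    |(γ w).1 - (γ u).1| < (γ w).2 - (γ u).2 := by
  obtain ⟨-, -, -, m, t, hm, ht0, htm, hinc, hpc⟩ := h
  have main : ∀ k : ℕ, k ≤ m → ∀ u w : ℝ, t 0 ≤ u → u < w → w ≤ t k →
      |(γ w).1 - (γ u).1| < (γ w).2 - (γ u).2 := by
    intro k
    induction k with
    | zero => intro _ u w h1 h2 h3; exfalso; linarith
    | succ k ih =>
      intro hk u w h1 h2 h3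
      have hkm : k < m := hk
      rcases le_or_gt w (t k) with hwk | hwk
      · exact ih (le_of_lt hkm) u w h1 h2 hwk
      rcases le_or_gt (t k) u with huk | huk
      · exact piece_cone (hpc k hkm).1 (hpc k hkm).2 huk h2 h3
      · have A := ih (le_of_lt hkm) u (t k) h1 huk le_rfl
        have B := piece_cone (hpc k hkm).1 (hpc k hkm).2 (le_refl (t k)) hwk h3
        have := abs_sub_abs_le_abs_sub ((γ w).1 - (γ u).1) ((γ (t k)).1 - (γ u).1)
        have habs : |(γ w).1 - (γ u).1| ≤ |(γ (t k)).1 - (γ u).1| + |(γ w).1 - (γ (t k)).1| := by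
          have := abs_add_le ((γ (t k)).1 - (γ u).1) ((γ w).1 - (γ (t k)).1)
          simpa using this
        linarith
  exact main m le_rfl u w (by rw [ht0]; exact hu) huw (by rw [htm]; exact hw)

/-- t is monotone -/
lemma part_mono {m : ℕ} {t : ℕ → ℝ} (hinc : ∀ j < m, t j < t (j + 1)) :
    ∀ j k, j ≤ k → k ≤ m → t j ≤ t k := by
  intro j k hjk hkm
  induction k with
  | zero => simp_all
  | succ k ih =>
    rcases Nat.lt_or_ge j (k+1) with h | h
    · have : t j ≤ t k := ih (Nat.lt_succ_iff.mp h) (le_of_lt hkm)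
      exact this.trans (hinc k hkm).le
    · have : j = k + 1 := le_antisymm hjk h
      simp [this]

/-- no timelike curve from origin to v -/
lemma no_curve {s tt : ℝ} (hs : 0 < s) (ht1 : 1 < tt) (ht2 : tt < 2)
    (γ : ℝ → ℝ × ℝ) (h : IsTimelikeCurveIn Mslit γ ((0:ℝ), (0:ℝ)) (1 + s, tt + s)) : False := by
  obtain ⟨h0, h1, hM, m, t, hm, ht0, htm, hinc, hpc⟩ := id h
  -- find first crossing of x = 1 among partition points
  have hx0 : (γ (t 0)).1 = 0 := by rw [ht0, h0]
  have hxm : (γ (t m)).1 = 1 + s := by rw [htm, h1]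
  have hex : ∃ j, j < m ∧ (1:ℝ) ≤ (γ (t (j+1))).1 := by
    rcases Nat.exists_eq_succ_of_ne_zero hm.ne' with ⟨m', hm'⟩
    refine ⟨m', by omega, ?_⟩
    have : m' + 1 = m := by omega
    rw [this, hxm]; linarith
  classical
  set j := Nat.find hex with hj
  obtain ⟨hjm, hj1⟩ : j < m ∧ (1:ℝ) ≤ (γ (t (j+1))).1 := Nat.find_spec hex
  have hjlt : (γ (t j)).1 < 1 := by
    rcases Nat.eq_zero_or_pos j with h0' | hpos
    · rw [h0', hx0]; norm_num
    · obtain ⟨i, hi⟩ := Nat.exists_eq_succ_of_ne_zero hpos.ne'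
      have hmin := Nat.find_min hex (m := i) (by omega)
      push_neg at hmin
      rw [hi]
      exact hmin (by omega)
  -- IVT on piece j
  have hcont : ContinuousOn (fun y => (γ y).1) (Icc (t j) (t (j+1))) :=
    ((hpc j hjm).1.continuousOn).fst
  have hle : t j ≤ t (j+1) := (hinc j hjm).le
  have hiv : Icc ((γ (t j)).1) ((γ (t (j+1))).1) ⊆ (fun y => (γ y).1) '' Icc (t j) (t (j+1)) :=
    intermediate_value_Icc hle hcont
  obtain ⟨u, hu, hu1⟩ : ∃ u ∈ Icc (t j) (t (j+1)), (γ u).1 = 1 :=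
    hiv ⟨hjlt.le, hj1⟩
  -- u ∈ [0,1]
  have h0u : (0:ℝ) ≤ u := by
    have := part_mono hinc 0 j (Nat.zero_le j) hjm.le
    rw [ht0] at this; linarith [hu.1]
  have hu1' : u ≤ 1 := by
    have := part_mono hinc (j+1) m hjm le_rfl
    rw [htm] at this; linarith [hu.2]
  have hune0 : u ≠ 0 := by
    intro h'; rw [h', h0] at hu1; norm_num at hu1
  have hune1 : u ≠ 1 := by
    intro h'; rw [h', h1] at hu1; simp at hu1; linarith
  have hc1 := curve_cone h (le_refl (0:ℝ)) (lt_of_le_of_ne h0u (Ne.symm hune0)) hu1'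
  have hc2 := curve_cone h h0u (lt_of_le_of_ne hu1' hune1) (le_refl (1:ℝ))
  rw [h0] at hc1
  rw [h1] at hc2
  simp only [hu1] at hc1 hc2
  norm_num at hc1 hc2
  rw [abs_of_pos hs] at hc2
  have := hM u ⟨h0u, hu1'⟩
  rw [Mslit] at this
  exact this ⟨hu1, by linarith, by linarith⟩

lemma dist_lb {s tt δ : ℝ} (hs : 0 < s) (ht1 : 1 < tt) (ht2 : tt < 2) (hδ : 0 < δ) :
    ENNReal.ofReal (Real.sqrt ((tt - 1) * (tt - 1 + 2 * s))) ≤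
      LorDist Mslit ((0 : ℝ), -δ) (1 + s, tt + s) := by
  classical
  set w₁ : ℝ × ℝ := (2, 2 + δ) with hw₁
  set w₂ : ℝ × ℝ := (2 * s, 2 * (tt + s - 1 + δ / 2)) with hw₂
  set A : ℝ × ℝ := (1, 1 - δ / 2) with hA
  set f₁ : ℝ → ℝ × ℝ := fun u => ((0 : ℝ), -δ) + u • w₁ with hf₁
  set f₂ : ℝ → ℝ × ℝ := fun u => A + (u - 1 / 2) • w₂ with hf₂
  set γ : ℝ → ℝ × ℝ := fun u => if u ≤ 1 / 2 then f₁ u else f₂ u with hγ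
  -- agreement facts
  have hg1 : ∀ u ∈ Icc (0 : ℝ) (1 / 2), γ u = f₁ u := by
    intro u hu; simp only [hγ]; exact if_pos hu.2
  have hf12 : f₁ (1 / 2) = f₂ (1 / 2) := by
    simp [hf₁, hf₂, hA, hw₁, Prod.ext_iff]; ring
  have hg2 : ∀ u ∈ Icc (1 / 2 : ℝ) 1, γ u = f₂ u := by
    intro u hu
    simp only [hγ]
    by_cases h : u ≤ 1 / 2
    · have hu2 : u = 1 / 2 := le_antisymm h hu.1
      rw [if_pos h, hu2, hf12]
    · rw [if_neg h]
  -- derivatives of the affine pieces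
  have hd1 : ∀ u : ℝ, HasDerivAt f₁ w₁ u := by
    intro u
    have h := ((hasDerivAt_id u).smul_const w₁).const_add ((0 : ℝ), -δ)
    rw [one_smul] at h
    exact h
  have hd2 : ∀ u : ℝ, HasDerivAt f₂ w₂ u := by
    intro u
    have h := (((hasDerivAt_id u).sub_const (1 / 2 : ℝ)).smul_const w₂).const_add A
    rw [one_smul] at h
    exact h
  -- the curve is timelike
  have hTC : IsTimelikeCurveIn Mslit γ ((0 : ℝ), -δ) (1 + s, tt + s) := by
    refine ⟨?_, ?_, ?_, 2, fun j => if j = 0 then (0:ℝ) else if j = 1 then 1/2 else 1, by norm_num, by norm_num, by norm_num, ?_, ?_⟩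
    · simp [hγ, hf₁, Prod.ext_iff]
    · have := hg2 1 (by norm_num)
      rw [this]
      simp only [hf₂, hA, hw₂, Prod.smul_mk, Prod.mk_add_mk, smul_eq_mul, Prod.mk.injEq]
      constructor <;> ring
    · -- membership
      intro u hu
      rcases le_or_gt u (1 / 2) with h | h
      · have := hg1 u ⟨hu.1, h⟩
        rw [this]
        simp only [hf₁, hw₁, Mslit, Set.mem_setOf_eq, Prod.smul_mk, Prod.mk_add_mk, smul_eq_mul]
        rintro ⟨hx, hy, -⟩
        have hu2 : u = 1 / 2 := by nlinarith
        rw [hu2] at hy; nlinarith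
      · have := hg2 u ⟨h.le, hu.2⟩
        rw [this]
        simp only [hf₂, hA, hw₂, Mslit, Set.mem_setOf_eq, Prod.smul_mk, Prod.mk_add_mk, smul_eq_mul]
        rintro ⟨hx, -, -⟩
        nlinarith
    · intro j hj
      interval_cases j <;> norm_num
    · intro j hj
      have hcd1 : ContDiff ℝ 1 f₁ := contDiff_const.add (contDiff_id.smul contDiff_const)
      have hcd2 : ContDiff ℝ 1 f₂ :=
        contDiff_const.add ((contDiff_id.sub contDiff_const).smul contDiff_const)
      interval_cases j
      · show ContDiffOn ℝ 1 γ (Icc (0:ℝ) (1/2)) ∧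
          ∀ u ∈ Icc (0:ℝ) (1/2), FDTimelike (derivWithin γ (Icc (0:ℝ) (1/2)) u)
        refine ⟨hcd1.contDiffOn.congr hg1, ?_⟩
        intro u hu
        have hD : derivWithin γ (Icc (0:ℝ) (1/2)) u = w₁ :=
          (((hd1 u).hasDerivWithinAt).congr hg1 (hg1 u hu)).derivWithin
            (uniqueDiffOn_Icc (by norm_num) u hu)
        rw [hD, FDTimelike, hw₁]
        show |(2:ℝ)| < 2 + δ
        rw [abs_of_pos (by norm_num : (0:ℝ) < 2)]
        linarith
      · show ContDiffOn ℝ 1 γ (Icc (1/2:ℝ) 1) ∧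
          ∀ u ∈ Icc (1/2:ℝ) 1, FDTimelike (derivWithin γ (Icc (1/2:ℝ) 1) u)
        refine ⟨hcd2.contDiffOn.congr hg2, ?_⟩
        intro u hu
        have hD : derivWithin γ (Icc (1/2:ℝ) 1) u = w₂ :=
          (((hd2 u).hasDerivWithinAt).congr hg2 (hg2 u hu)).derivWithin
            (uniqueDiffOn_Icc (by norm_num) u hu)
        rw [hD, FDTimelike, hw₂]
        show |2 * s| < 2 * (tt + s - 1 + δ / 2)
        rw [abs_of_pos (by nlinarith)]
        nlinarith
  -- derivative of γ on open pieces
  have hder1 : ∀ u ∈ Ioo (0:ℝ) (1/2), deriv γ u = w₁ := by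
    intro u hu
    have hev : γ =ᶠ[nhds u] f₁ := by
      filter_upwards [Iio_mem_nhds hu.2] with x hx
      simp only [hγ]; exact if_pos (le_of_lt hx)
    rw [hev.deriv_eq]
    exact (hd1 u).deriv
  have hder2 : ∀ u ∈ Ioo (1/2:ℝ) 1, deriv γ u = w₂ := by
    intro u hu
    have hev : γ =ᶠ[nhds u] f₂ := by
      filter_upwards [Ioi_mem_nhds hu.1] with x hx
      simp only [hγ]; exact if_neg (not_le.mpr hx)
    rw [hev.deriv_eq]
    exact (hd2 u).deriv
  set F : ℝ → ℝ := fun u => Real.sqrt ((deriv γ u).2 ^ 2 - (deriv γ u).1 ^ 2) with hF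
  set c₁ : ℝ := Real.sqrt ((2 + δ) ^ 2 - 2 ^ 2) with hc₁
  set c₂ : ℝ := Real.sqrt ((2 * (tt + s - 1 + δ / 2)) ^ 2 - (2 * s) ^ 2) with hc₂
  have hne : ∀ c : ℝ, ∀ᵐ x : ℝ, x ≠ c := by
    intro c
    have h0 : MeasureTheory.volume ({c} : Set ℝ) = 0 := MeasureTheory.measure_singleton c
    rw [MeasureTheory.ae_iff]
    convert h0 using 2
    ext x; simp
  have h1ae : ∀ᵐ x : ℝ, x ∈ Set.uIoc (0:ℝ) (1/2) → F x = c₁ := by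
    filter_upwards [hne (1/2)] with x hx hmem
    rw [Set.uIoc_of_le (by norm_num : (0:ℝ) ≤ 1/2)] at hmem
    have hx' : x ∈ Ioo (0:ℝ) (1/2) := ⟨hmem.1, lt_of_le_of_ne hmem.2 hx⟩
    rw [hF]
    simp only [hder1 x hx', hw₁]
    rfl
  have h2ae : ∀ᵐ x : ℝ, x ∈ Set.uIoc (1/2:ℝ) 1 → F x = c₂ := by
    filter_upwards [hne 1] with x hx hmem
    rw [Set.uIoc_of_le (by norm_num : (1/2:ℝ) ≤ 1)] at hmem
    have hx' : x ∈ Ioo (1/2:ℝ) 1 := ⟨hmem.1, lt_of_le_of_ne hmem.2 hx⟩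
    rw [hF]
    simp only [hder2 x hx', hw₂]
    rfl
  have h1ae' : F =ᵐ[MeasureTheory.volume.restrict (Set.uIoc (0:ℝ) (1/2))] fun _ => c₁ := by
    filter_upwards [MeasureTheory.ae_restrict_of_ae h1ae,
      MeasureTheory.ae_restrict_mem measurableSet_uIoc] with x h1 h2
    exact h1 h2
  have h2ae' : F =ᵐ[MeasureTheory.volume.restrict (Set.uIoc (1/2:ℝ) 1)] fun _ => c₂ := by
    filter_upwards [MeasureTheory.ae_restrict_of_ae h2ae,
      MeasureTheory.ae_restrict_mem measurableSet_uIoc] with x h1 h2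
    exact h1 h2
  have hInt1 : IntervalIntegrable F MeasureTheory.volume 0 (1/2) :=
    (intervalIntegrable_const (c := c₁)).congr_ae h1ae'.symm
  have hInt2 : IntervalIntegrable F MeasureTheory.volume (1/2) 1 :=
    (intervalIntegrable_const (c := c₂)).congr_ae h2ae'.symm
  have hsplit := intervalIntegral.integral_add_adjacent_intervals hInt1 hInt2
  have hI1 : ∫ x in (0:ℝ)..(1/2), F x = (1/2) * c₁ := by
    rw [intervalIntegral.integral_congr_ae h1ae, intervalIntegral.integral_const]
    simp
  have hI2 : ∫ x in (1/2:ℝ)..1, F x = (1/2) * c₂ := by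
    rw [intervalIntegral.integral_congr_ae h2ae, intervalIntegral.integral_const]
    norm_num
  have hLlen : Llen γ = (1/2) * c₁ + (1/2) * c₂ := by
    rw [Llen, ← hsplit, hI1, hI2]
  -- lower bound on c₂
  set X : ℝ := (tt - 1) * (tt - 1 + 2 * s) with hX
  have hX0 : 0 ≤ X := by nlinarith
  have hc₂lb : 2 * Real.sqrt X ≤ c₂ := by
    have h4 : (4:ℝ) * X ≤ (2 * (tt + s - 1 + δ / 2)) ^ 2 - (2 * s) ^ 2 := by nlinarith
    have := Real.sqrt_le_sqrt h4
    rw [show (4:ℝ) * X = 2 ^ 2 * X by ring, Real.sqrt_mul (by positivity), 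
      Real.sqrt_sq (by norm_num : (0:ℝ) ≤ 2)] at this
    exact this
  have hfin : Real.sqrt X ≤ Llen γ := by
    have hc₁0 : 0 ≤ c₁ := Real.sqrt_nonneg _
    rw [hLlen]; linarith
  calc ENNReal.ofReal (Real.sqrt X) ≤ ENNReal.ofReal (Llen γ) := ENNReal.ofReal_le_ofReal hfin
    _ ≤ LorDist Mslit ((0 : ℝ), -δ) (1 + s, tt + s) := le_iSup₂ (f := fun γ _ => ENNReal.ofReal (Llen γ)) γ hTC

/-- For every `v ∈ V`: `d((0,0), v) = 0`, `inf_{δ>0} d((0,−δ), v) > 0`, and the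
Lorentzian distance is discontinuous at `((0,0), v)`. -/
theorem stmt_10 : ∀ v ∈ Vshadow,
    LorDist Mslit ((0 : ℝ), (0 : ℝ)) v = 0 ∧
    (0 < ⨅ (δ : ℝ) (_ : 0 < δ), LorDist Mslit ((0 : ℝ), -δ) v) ∧
    ¬ ContinuousWithinAt (fun pq : (ℝ × ℝ) × (ℝ × ℝ) => LorDist Mslit pq.1 pq.2)
        (Mslit ×ˢ Mslit) (((0 : ℝ), (0 : ℝ)), v) := by
  rintro v ⟨tt, ht1, ht2, s, hs, rfl⟩
  have hX : (0:ℝ) < (tt - 1) * (tt - 1 + 2 * s) := by nlinarith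
  have hεpos : (0:ℝ≥0∞) < ENNReal.ofReal (Real.sqrt ((tt - 1) * (tt - 1 + 2 * s))) := by
    rw [ENNReal.ofReal_pos]
    exact Real.sqrt_pos.mpr hX
  have h1 : LorDist Mslit ((0 : ℝ), (0 : ℝ)) (1 + s, tt + s) = 0 := by
    refine le_antisymm ?_ zero_le
    refine iSup_le fun γ => iSup_le fun hγ => ?_
    exact (no_curve hs ht1 ht2 γ hγ).elim
  have h2 : ∀ δ : ℝ, 0 < δ → ENNReal.ofReal (Real.sqrt ((tt - 1) * (tt - 1 + 2 * s))) ≤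
      LorDist Mslit ((0:ℝ), -δ) (1 + s, tt + s) := fun δ hδ => dist_lb hs ht1 ht2 hδ
  refine ⟨h1, lt_of_lt_of_le hεpos (le_iInf fun δ => le_iInf fun hδ => h2 δ hδ), ?_⟩
  intro hcont
  have hseq : Filter.Tendsto
      (fun n : ℕ => ((((0:ℝ), -(1/(n+1):ℝ))), ((1 + s, tt + s) : ℝ × ℝ)))
      Filter.atTop
      (nhdsWithin (((0:ℝ), (0:ℝ)), ((1 + s, tt + s) : ℝ × ℝ)) (Mslit ×ˢ Mslit)) := by
    apply tendsto_nhdsWithin_of_tendsto_nhds_of_eventually_within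
    · refine Filter.Tendsto.prodMk_nhds ?_ tendsto_const_nhds
      refine Filter.Tendsto.prodMk_nhds tendsto_const_nhds ?_
      have h := (tendsto_one_div_add_atTop_nhds_zero_nat (𝕜 := ℝ)).neg
      simpa using h
    · refine Filter.Eventually.of_forall fun n => ⟨?_, ?_⟩
      · rintro ⟨h, -⟩; norm_num at h
      · rintro ⟨h, -⟩; simp only at h; linarith
  have hF := Filter.Tendsto.comp hcont hseq
  have h1' : LorDist Mslit (0 : ℝ × ℝ) (1 + s, tt + s) = 0 := h1
  have hF' : Filter.Tendsto
      (fun n : ℕ => LorDist Mslit ((0:ℝ), -(1/(n+1):ℝ)) (1 + s, tt + s))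
      Filter.atTop (nhds 0) := by
    simpa [Function.comp_def, h1, h1'] using hF
  have hev : ∀ᶠ y in nhds (0:ℝ≥0∞),
      y < ENNReal.ofReal (Real.sqrt ((tt - 1) * (tt - 1 + 2 * s))) :=
    Iio_mem_nhds hεpos
  obtain ⟨n, hn⟩ := (hF'.eventually hev).exists
  exact absurd (h2 (1/(n+1)) (by positivity)) (not_le.mpr hn)
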